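/- There exists a continuous map g : [0,1] → [0,1] that has periodic points of least period 2^n for every n ≥ 0, but no periodic points of any least period that is not a power of 2. -/

import Mathlib

open Set

noncomputable def Gb (s : ℝ) : ℝ := if s ≤ 2 then 7/3*s - 5/3 else 5 - s

noncomputable def GG (t : ℝ) : ℝ :=
  if 0 < t then (3:ℝ)^(⌊Real.logb 3 t⌋) * Gb (t / (3:ℝ)^(⌊Real.logb 3 t⌋)) else 0

noncomputable def gg (x : ℝ) : ℝ := GG (1 - x)



lemma floor_logb_sandwich {t : ℝ} (ht : 0 < t) :
    (3:ℝ)^(⌊Real.logb 3 t⌋) ≤ t ∧ t < (3:ℝ)^(⌊Real.logb 3 t⌋ + 1) := by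
  have h3 : (1:ℝ) < 3 := by norm_num
  constructor
  · calc (3:ℝ)^(⌊Real.logb 3 t⌋) = (3:ℝ)^((⌊Real.logb 3 t⌋ : ℝ)) := by
          rw [Real.rpow_intCast]
    _ ≤ (3:ℝ)^(Real.logb 3 t) := Real.rpow_le_rpow_of_exponent_le h3.le (Int.floor_le _)
    _ = t := Real.rpow_logb (by norm_num) (by norm_num) ht
  · calc t = (3:ℝ)^(Real.logb 3 t) := (Real.rpow_logb (by norm_num) (by norm_num) ht).symm
    _ < (3:ℝ)^(((⌊Real.logb 3 t⌋ + 1 : ℤ) : ℝ)) := by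
          apply Real.rpow_lt_rpow_of_exponent_lt h3
          push_cast
          exact Int.lt_floor_add_one _
    _ = (3:ℝ)^(⌊Real.logb 3 t⌋ + 1) := by rw [Real.rpow_intCast]

lemma floor_logb_eq {t : ℝ} {e : ℤ} (h1 : (3:ℝ)^e ≤ t) (h2 : t < (3:ℝ)^(e+1)) :
    ⌊Real.logb 3 t⌋ = e := by
  have ht : 0 < t := lt_of_lt_of_le (zpow_pos (by norm_num) e) h1
  have h3 : (1:ℝ) < 3 := by norm_num
  have hle : (e:ℝ) ≤ Real.logb 3 t := by
    rw [Real.le_logb_iff_rpow_le h3 ht, Real.rpow_intCast]; exact h1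
  have hlt : Real.logb 3 t < (e:ℝ) + 1 := by
    rw [Real.logb_lt_iff_lt_rpow h3 ht]
    calc t < (3:ℝ)^(e+1) := h2
    _ = (3:ℝ)^(((e:ℝ)+1)) := by rw [← Real.rpow_intCast]; norm_num
  exact Int.floor_eq_iff.mpr ⟨hle, hlt⟩

lemma GG_eq {t : ℝ} {e : ℤ} (h1 : (3:ℝ)^e ≤ t) (h2 : t < (3:ℝ)^(e+1)) :
    GG t = (3:ℝ)^e * Gb (t / (3:ℝ)^e) := by
  have ht : 0 < t := lt_of_lt_of_le (zpow_pos (by norm_num) e) h1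
  rw [GG, if_pos ht, floor_logb_eq h1 h2]

lemma GG_pow (e : ℤ) : GG ((3:ℝ)^e) = 2/3 * (3:ℝ)^e := by
  have h1 : (3:ℝ)^e ≤ (3:ℝ)^e := le_refl _
  have h2 : (3:ℝ)^e < (3:ℝ)^(e+1) := by
    apply zpow_lt_zpow_right₀ (by norm_num) (by omega)
  rw [GG_eq h1 h2, div_self (by positivity), Gb, if_pos (by norm_num)]
  ring

lemma GG_three (t : ℝ) : GG (3*t) = 3 * GG t := by
  rcases le_or_gt t 0 with h | h
  · rw [GG, GG, if_neg (by linarith), if_neg (by linarith), mul_zero]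
  · obtain ⟨h1, h2⟩ := floor_logb_sandwich h
    set e := ⌊Real.logb 3 t⌋
    have k1 : (3:ℝ)^(e+1) ≤ 3*t := by
      rw [zpow_add_one₀ (by norm_num : (3:ℝ) ≠ 0)]; nlinarith [zpow_pos (show (0:ℝ)<3 by norm_num) e]
    have k2 : 3*t < (3:ℝ)^(e+1+1) := by
      rw [zpow_add_one₀ (by norm_num : (3:ℝ) ≠ 0) (e+1)]; nlinarith
    rw [GG_eq k1 k2, GG_eq h1 h2]
    rw [zpow_add_one₀ (by norm_num : (3:ℝ) ≠ 0)]
    have : 3 * t / ((3:ℝ)^e * 3) = t / (3:ℝ)^e := by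
      field_simp
    rw [this]; ring

-- explicit formulas
lemma GG_f1 {t : ℝ} {e : ℤ} (h1 : (3:ℝ)^e ≤ t) (h2 : t ≤ 2*(3:ℝ)^e) :
    GG t = 7/3*t - 5/3*(3:ℝ)^e := by
  have hp : (0:ℝ) < (3:ℝ)^e := zpow_pos (by norm_num) e
  have h2' : t < (3:ℝ)^(e+1) := by
    rw [zpow_add_one₀ (by norm_num : (3:ℝ) ≠ 0)]; nlinarith
  rw [GG_eq h1 h2', Gb, if_pos (by rw [div_le_iff₀ hp]; linarith)]
  field_simp

lemma GG_f2 {t : ℝ} {e : ℤ} (h1 : 2*(3:ℝ)^e ≤ t) (h2 : t ≤ (3:ℝ)^(e+1)) :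
    GG t = 5*(3:ℝ)^e - t := by
  have hp : (0:ℝ) < (3:ℝ)^e := zpow_pos (by norm_num) e
  rcases eq_or_lt_of_le h2 with he | h2'
  · rw [he, GG_pow, zpow_add_one₀ (by norm_num : (3:ℝ) ≠ 0)]; ring
  · have h1' : (3:ℝ)^e ≤ t := by linarith
    rw [GG_eq h1' h2', Gb]
    rcases le_or_gt (t / (3:ℝ)^e) 2 with hc | hc
    · rw [if_pos hc]
      have : t = 2*(3:ℝ)^e := by
        rw [div_le_iff₀ hp] at hc; linarith
      rw [this]; field_simp; ring
    · rw [if_neg (not_le.mpr hc)]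
      field_simp

lemma pow_neg_one : ((3:ℝ)^(-1:ℤ)) = 1/3 := by norm_num
lemma pow_zero' : ((3:ℝ)^(0:ℤ)) = 1 := by norm_num

lemma gg_rec (x : ℝ) : gg x = gg (3*x - 2) / 3 := by
  have : (1 - (3*x - 2)) = 3*(1-x) := by ring
  rw [gg, gg, this, GG_three]; ring

lemma gg_low {x : ℝ} (h0 : 0 ≤ x) (h1 : x ≤ 1/3) : gg x = x + 2/3 := by
  rw [gg, GG_f2 (e := -1) (by rw [pow_neg_one]; linarith) (by norm_num; linarith)]
  rw [pow_neg_one]; ring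

lemma gg_mid {x : ℝ} (h0 : 1/3 ≤ x) (h1 : x ≤ 2/3) : gg x = 16/9 - 7/3*x := by
  rw [gg, GG_f1 (e := -1) (by rw [pow_neg_one]; linarith) (by rw [pow_neg_one]; linarith)]
  rw [pow_neg_one]; ring

lemma GG_nonneg (t : ℝ) : 0 ≤ GG t := by
  rcases le_or_gt t 0 with h | h
  · rw [GG, if_neg (by linarith)]
  · obtain ⟨h1, h2⟩ := floor_logb_sandwich h
    set e := ⌊Real.logb 3 t⌋
    have hp : (0:ℝ) < (3:ℝ)^e := zpow_pos (by norm_num) e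
    rw [GG, if_pos h]
    have hs1 : 1 ≤ t / (3:ℝ)^e := by rw [le_div_iff₀ hp]; linarith
    have hs2 : t / (3:ℝ)^e < 3 := by
      rw [div_lt_iff₀ hp]
      rw [zpow_add_one₀ (by norm_num : (3:ℝ) ≠ 0)] at h2; linarith
    have : 0 ≤ Gb (t / (3:ℝ)^e) := by
      rw [Gb]; split <;> rename_i hc <;> nlinarith
    positivity

lemma GG_le3 {t : ℝ} (h0 : 0 ≤ t) : GG t ≤ 3*t := by
  rcases eq_or_lt_of_le h0 with h | h
  · rw [GG, if_neg (by rw [← h]; norm_num), ← h]; norm_num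
  · obtain ⟨h1, h2⟩ := floor_logb_sandwich h
    set e := ⌊Real.logb 3 t⌋
    have hp : (0:ℝ) < (3:ℝ)^e := zpow_pos (by norm_num) e
    rw [GG, if_pos h]
    have hs1 : 1 ≤ t / (3:ℝ)^e := by rw [le_div_iff₀ hp]; linarith
    have hs2 : t / (3:ℝ)^e < 3 := by
      rw [div_lt_iff₀ hp]
      rw [zpow_add_one₀ (by norm_num : (3:ℝ) ≠ 0)] at h2; linarith
    have : Gb (t / (3:ℝ)^e) ≤ 3 := by
      rw [Gb]; split <;> rename_i hc <;> [nlinarith; (push_neg at hc; nlinarith)]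
    nlinarith

lemma GG_le_one {t : ℝ} (h0 : 0 ≤ t) (h1 : t ≤ 1) : GG t ≤ 1 := by
  rcases le_or_gt t (1/3) with h | h
  · calc GG t ≤ 3*t := GG_le3 h0
    _ ≤ 1 := by linarith
  · rcases le_or_gt t (2/3) with h' | h'
    · rw [GG_f1 (e := -1) (by rw [pow_neg_one]; linarith) (by rw [pow_neg_one]; linarith),
        pow_neg_one]
      linarith
    · rw [GG_f2 (e := -1) (by rw [pow_neg_one]; linarith) (by norm_num; linarith),
        pow_neg_one]
      linarith


noncomputable def Fe (e : ℤ) (t : ℝ) : ℝ :=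
  if t ≤ 2*(3:ℝ)^e then 7/3*t - 5/3*(3:ℝ)^e else 5*(3:ℝ)^e - t

lemma Fe_cont (e : ℤ) : Continuous (Fe e) := by
  apply Continuous.if_le (by continuity) (by continuity) continuous_id continuous_const
  intro x hx
  simp only [id_eq] at hx
  rw [hx]; ring

noncomputable def F2 (e : ℤ) (t : ℝ) : ℝ :=
  if t ≤ (3:ℝ)^e then Fe (e-1) t else Fe e t

lemma F2_cont (e : ℤ) : Continuous (F2 e) := by
  apply Continuous.if_le (Fe_cont (e-1)) (Fe_cont e) continuous_id continuous_const
  intro x hx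
  simp only [id_eq] at hx
  have hp : (0:ℝ) < (3:ℝ)^(e-1) := zpow_pos (by norm_num) _
  have h3 : (3:ℝ)^e = 3*(3:ℝ)^(e-1) := by
    rw [show e = (e-1)+1 by omega, zpow_add_one₀ (by norm_num : (3:ℝ) ≠ 0)]; ring
  rw [hx, Fe, Fe, if_neg (by rw [h3]; nlinarith), if_pos (by nlinarith [zpow_pos (show (0:ℝ)<3 by norm_num) e])]
  rw [h3]; ring

lemma GG_eq_Fe {e : ℤ} {t : ℝ} (h1 : (3:ℝ)^e ≤ t) (h2 : t ≤ (3:ℝ)^(e+1)) :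
    GG t = Fe e t := by
  rw [Fe]
  rcases le_or_gt t (2*(3:ℝ)^e) with h | h
  · rw [if_pos h, GG_f1 h1 h]
  · rw [if_neg (not_le.mpr h), GG_f2 h.le h2]

lemma GG_eq_F2 {e : ℤ} {t : ℝ} (h1 : (3:ℝ)^(e-1) ≤ t) (h2 : t ≤ (3:ℝ)^(e+1)) :
    GG t = F2 e t := by
  rw [F2]
  rcases le_or_gt t ((3:ℝ)^e) with h | h
  · rw [if_pos h, GG_eq_Fe h1 (by rw [show e-1+1 = e by omega]; exact h)]
  · rw [if_neg (not_le.mpr h), GG_eq_Fe h.le h2]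

lemma GG_contAt {t : ℝ} (ht : 0 < t) : ContinuousAt GG t := by
  obtain ⟨h1, h2⟩ := floor_logb_sandwich ht
  set e := ⌊Real.logb 3 t⌋ with he
  have hlt : (3:ℝ)^(e-1) < (3:ℝ)^e := zpow_lt_zpow_right₀ (by norm_num) (by omega)
  have hU : Ioo ((3:ℝ)^(e-1)) ((3:ℝ)^(e+1)) ∈ nhds t :=
    Ioo_mem_nhds (lt_of_lt_of_le hlt h1) h2
  apply ContinuousAt.congr ((F2_cont e).continuousAt)
  apply Filter.eventuallyEq_of_mem hU
  intro s hs
  exact (GG_eq_F2 hs.1.le hs.2.le).symm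

lemma GG_cont : ContinuousOn GG (Icc (0:ℝ) 1) := by
  intro t ht
  rcases eq_or_lt_of_le ht.1 with h | h
  · -- t = 0
    rw [ContinuousWithinAt]
    have hGG0 : GG t = 0 := by rw [GG, if_neg (by rw [← h]; norm_num)]
    rw [hGG0]
    apply squeeze_zero' (f := GG) (g := fun t => 3*t)
    · filter_upwards with s using GG_nonneg s
    · filter_upwards [self_mem_nhdsWithin] with s hs using GG_le3 hs.1
    · have : Filter.Tendsto (fun s : ℝ => 3*s) (nhds t) (nhds (3*t)) := by
        apply Filter.Tendsto.const_mul; exact Filter.tendsto_id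
      rw [← h] at this ⊢
      simpa using this.mono_left nhdsWithin_le_nhds
  · exact (GG_contAt h).continuousWithinAt

lemma gg_cont : ContinuousOn gg (Icc (0:ℝ) 1) := by
  have h1 : ContinuousOn (fun x : ℝ => 1 - x) (Icc (0:ℝ) 1) := by fun_prop
  apply GG_cont.comp h1
  intro x hx
  simp only [mem_Icc] at hx ⊢
  constructor
  · show (0:ℝ) ≤ 1 - x; linarith [hx.2]
  · show (1:ℝ) - x ≤ 1; linarith [hx.1]


lemma gg_mem {x : ℝ} (h : x ∈ Icc (0:ℝ) 1) : gg x ∈ Icc (0:ℝ) 1 := by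
  rw [Set.mem_Icc] at h
  exact ⟨GG_nonneg _, GG_le_one (by linarith [h.2]) (by linarith [h.1])⟩

lemma gg_high {x : ℝ} (h0 : 2/3 ≤ x) (h1 : x ≤ 1) : gg x ∈ Icc (0:ℝ) (1/3) := by
  rw [gg_rec]
  have hm : (3*x - 2) ∈ Icc (0:ℝ) 1 := ⟨by linarith, by linarith⟩
  have := gg_mem hm
  exact ⟨by linarith [this.1], by linarith [this.2]⟩

lemma gg_low_mem {x : ℝ} (h0 : 0 ≤ x) (h1 : x ≤ 1/3) : gg x ∈ Icc (2/3:ℝ) 1 := by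
  rw [gg_low h0 h1]; exact ⟨by linarith, by linarith⟩

lemma gg_sq {w : ℝ} (h0 : 0 ≤ w) (h1 : w ≤ 1/3) : gg (gg w) = gg (3*w) / 3 := by
  rw [gg_low h0 h1, gg_rec (w + 2/3)]
  have : 3*(w + 2/3) - 2 = 3*w := by ring
  rw [this]

lemma iter_sq {x : ℝ} (h0 : 0 ≤ x) (h1 : x ≤ 1/3) (k : ℕ) :
    gg^[2*k] x ∈ Icc (0:ℝ) (1/3) ∧ gg^[2*k] x = gg^[k] (3*x) / 3 := by
  induction k with
  | zero => exact ⟨⟨h0, h1⟩, by rw [Function.iterate_zero_apply, Function.iterate_zero_apply]; ring⟩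
  | succ k ih =>
    obtain ⟨⟨hw0, hw1⟩, hw⟩ := ih
    have e1 : 2*(k+1) = (2*k) + 1 + 1 := by ring
    have e2 : gg^[2*(k+1)] x = gg (gg (gg^[2*k] x)) := by
      rw [e1, Function.iterate_succ_apply', Function.iterate_succ_apply']
    have e3 : gg (gg (gg^[2*k] x)) = gg (3 * gg^[2*k] x) / 3 := gg_sq hw0 hw1
    have e4 : 3 * gg^[2*k] x = gg^[k] (3*x) := by rw [hw]; ring
    constructor
    · rw [e2, gg_low hw0 hw1]
      exact gg_high (by linarith) (by linarith)
    · rw [e2, e3, e4]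
      rw [Function.iterate_succ_apply' gg k (3*x)]

lemma iter_odd {x : ℝ} (h0 : 0 ≤ x) (h1 : x ≤ 1/3) (k : ℕ) :
    gg^[2*k+1] x ∈ Icc (2/3:ℝ) 1 := by
  obtain ⟨⟨hw0, hw1⟩, _⟩ := iter_sq h0 h1 k
  rw [Function.iterate_succ_apply']
  exact gg_low_mem hw0 hw1

noncomputable def yv (n : ℕ) : ℝ := (8/15) / 3^n

lemma yv_pos (n : ℕ) : 0 < yv n := by rw [yv]; positivity
lemma yv_le (n : ℕ) : yv n ≤ 8/15 := by
  rw [yv]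
  have : (1:ℝ) ≤ 3^n := one_le_pow₀ (by norm_num)
  rw [div_le_iff₀ (by positivity)]
  nlinarith
lemma yv_succ (n : ℕ) : yv (n+1) = yv n / 3 := by rw [yv, yv, pow_succ]; ring
lemma yv_succ_le (n : ℕ) : yv (n+1) ≤ 1/3 := by
  rw [yv_succ]; linarith [yv_le n]

lemma gg_fixed : gg (8/15) = 8/15 := by
  rw [gg_mid (by norm_num) (by norm_num)]; norm_num

lemma per (n : ℕ) : gg^[2^n] (yv n) = yv n ∧
    ∀ i, 0 < i → i < 2^n → gg^[i] (yv n) ≠ yv n := by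
  induction n with
  | zero =>
    refine ⟨?_, fun i hi1 hi2 => by omega⟩
    simp [yv, gg_fixed]
  | succ n ih =>
    obtain ⟨hper, hmin⟩ := ih
    have hy0 : 0 ≤ yv (n+1) := (yv_pos _).le
    have hy1 : yv (n+1) ≤ 1/3 := yv_succ_le n
    have h3y : 3 * yv (n+1) = yv n := by rw [yv_succ]; ring
    constructor
    · have : 2^(n+1) = 2*(2^n) := by ring
      rw [this, (iter_sq hy0 hy1 (2^n)).2, h3y, hper, ← yv_succ]
    · intro i hi1 hi2
      rcases Nat.even_or_odd i with ⟨j, hj⟩ | ⟨j, hj⟩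
      · have hj' : i = 2*j := by omega
        have hj1 : 0 < j := by omega
        have hj2 : j < 2^n := by rw [hj'] at hi2; simp [pow_succ] at hi2; omega
        rw [hj', (iter_sq hy0 hy1 j).2, h3y]
        intro hcon
        apply hmin j hj1 hj2
        rw [yv_succ] at hcon
        field_simp at hcon
        exact hcon
      · rw [hj]
        have := iter_odd hy0 hy1 j
        intro hcon
        rw [hcon] at this
        have := this.1
        linarith [yv_succ_le n]

-- iterates stay in [0,1]
lemma iter_mem {y : ℝ} (hy : y ∈ Icc (0:ℝ) 1) (k : ℕ) : gg^[k] y ∈ Icc (0:ℝ) 1 := by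
  induction k with
  | zero => simpa
  | succ k ih => rw [Function.iterate_succ_apply']; exact gg_mem ih

def S : Set ℝ := Icc (0:ℝ) (1/3) ∪ Icc (2/3:ℝ) 1

lemma S_inv {x : ℝ} (h : x ∈ S) : gg x ∈ S := by
  rcases h with h | h
  · exact Or.inr (gg_low_mem h.1 h.2)
  · exact Or.inl (gg_high h.1 h.2)

lemma S_iter_inv {x : ℝ} (h : x ∈ S) (k : ℕ) : gg^[k] x ∈ S := by
  induction k with
  | zero => simpa
  | succ k ih => rw [Function.iterate_succ_apply']; exact S_inv ih

-- affine-orbit lemma for orbits in middle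
lemma mid_orbit {y : ℝ} (hmid : ∀ j : ℕ, gg^[j] y ∈ Icc (1/3:ℝ) (2/3)) (i : ℕ) :
    gg^[i] y = (-(7/3))^i * (y - 8/15) + 8/15 := by
  induction i with
  | zero => simp
  | succ i ih =>
    rw [Function.iterate_succ_apply', ih]
    have h := hmid i
    rw [ih] at h
    rw [gg_mid h.1 h.2]
    ring

theorem no_bad : ∀ m : ℕ, 0 < m → ∀ y ∈ Icc (0:ℝ) 1, gg^[m] y = y →
    (∀ i, 0 < i → i < m → gg^[i] y ≠ y) → ∃ n : ℕ, m = 2^n := by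
  intro m
  induction m using Nat.strong_induction_on with
  | _ m IH =>
  intro hm y hy hper hmin
  rcases eq_or_lt_of_le (show 1 ≤ m from hm) with h1 | h2
  · exact ⟨0, by omega⟩
  -- m ≥ 2
  by_cases hS : ∃ j : ℕ, gg^[j] y ∈ S
  · -- orbit meets S, hence y ∈ S
    obtain ⟨j, hj⟩ := hS
    have hyS : y ∈ S := by
      have hmj : gg^[m*j] y = y := by
        rw [Function.iterate_mul]
        exact Function.iterate_fixed hper j
      have hjle : j ≤ m*j := Nat.le_mul_of_pos_left j hm
      have : gg^[(m*j - j) + j] y = y := by rw [Nat.sub_add_cancel hjle]; exact hmj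
      rw [Function.iterate_add_apply] at this
      rw [← this]
      exact S_iter_inv hj (m*j - j)
    -- reduce to case y ∈ [0,1/3]
    have key : ∀ z : ℝ, z ∈ Icc (0:ℝ) (1/3) → gg^[m] z = z →
        (∀ i, 0 < i → i < m → gg^[i] z ≠ z) → ∃ n : ℕ, m = 2^n := by
      intro z hz hzper hzmin
      -- m is even
      rcases Nat.even_or_odd m with ⟨k, hk⟩ | ⟨k, hk⟩
      · have hk' : m = 2*k := by omega
        have hk0 : 0 < k := by omega
        obtain ⟨_, hiter⟩ := iter_sq hz.1 hz.2 k
        rw [hk'] at hzper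
        -- gg^[k] (3z) = 3z
        have hzper' : gg^[k] (3*z) = 3*z := by
          rw [hiter] at hzper
          field_simp at hzper
          linarith [hzper]
        have h3z : 3*z ∈ Icc (0:ℝ) 1 := ⟨by linarith [hz.1], by linarith [hz.2]⟩
        have hzmin' : ∀ i, 0 < i → i < k → gg^[i] (3*z) ≠ 3*z := by
          intro i hi1 hi2 hcon
          apply hzmin (2*i) (by omega) (by omega)
          obtain ⟨_, hiter2⟩ := iter_sq hz.1 hz.2 i
          rw [hiter2, hcon]
          ring
        obtain ⟨n, hn⟩ := IH k (by omega) hk0 (3*z) h3z hzper' hzmin'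
        exact ⟨n+1, by rw [hk', hn]; ring⟩
      · -- m odd: contradiction
        exfalso
        have := iter_odd hz.1 hz.2 k
        rw [← hk] at this
        rw [hzper] at this
        have := this.1
        linarith [hz.2]
    rcases hyS with hyA | hyC
    · exact key y hyA hper hmin
    · -- shift: use z = gg y
      have hz : gg y ∈ Icc (0:ℝ) (1/3) := gg_high hyC.1 hyC.2
      have hzper : gg^[m] (gg y) = gg y := by
        rw [← Function.iterate_succ_apply, Function.iterate_succ_apply', hper]
      have hzmin : ∀ i, 0 < i → i < m → gg^[i] (gg y) ≠ gg y := by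
        intro i hi1 hi2 hcon
        apply hmin i hi1 hi2
        have step : gg^[m-1] (gg^[i] (gg y)) = gg^[m-1] (gg y) := by rw [hcon]
        have e1 : gg^[m-1] (gg^[i] (gg y)) = gg^[i] (gg^[m] y) := by
          rw [← Function.iterate_succ_apply, ← Function.iterate_add_apply,
            ← Function.iterate_add_apply]
          congr 1
          omega
        have e2 : gg^[m-1] (gg y) = gg^[m] y := by
          rw [← Function.iterate_succ_apply]
          congr 1
          omega
        rw [e1, e2, hper] at step
        exact step
      exact key (gg y) hz hzper hzmin
  · -- orbit in middle: y = fixed point, contradiction with m ≥ 2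
    exfalso
    push_neg at hS
    have hmid : ∀ j : ℕ, gg^[j] y ∈ Icc (1/3:ℝ) (2/3) := by
      intro j
      have h1 := iter_mem hy j
      have h2 := hS j
      rw [S] at h2
      simp only [mem_union, mem_Icc, not_or, not_and_or, not_le] at h2
      constructor
      · rcases h2.1 with h | h
        · linarith [h1.1]
        · linarith
      · rcases h2.2 with h | h
        · linarith
        · linarith [h1.2]
    have hy_eq : y = 8/15 := by
      have := mid_orbit hmid m
      rw [hper] at this
      have hne : (-(7/3):ℝ)^m ≠ 1 := by
        intro hcon
        have : |(-(7/3):ℝ)^m| = 1 := by rw [hcon]; norm_num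
        rw [abs_pow] at this
        have h73 : |(-(7/3):ℝ)| = 7/3 := by norm_num
        rw [h73] at this
        have : (7/3:ℝ)^m ≥ 7/3 := by
          calc (7/3:ℝ)^m ≥ (7/3)^1 := by
                apply pow_le_pow_right₀ (by norm_num) (by omega)
          _ = 7/3 := pow_one _
        linarith
      by_contra hne2
      apply hne
      have hy15 : y - 8/15 ≠ 0 := fun hc => hne2 (by linarith)
      have : ((-(7/3):ℝ)^m - 1) * (y - 8/15) = 0 := by linarith
      rcases mul_eq_zero.mp this with h | h
      · linarith
      · exact absurd h hy15
    apply hmin 1 (by omega) h2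
    rw [Function.iterate_one, hy_eq]
    rw [gg_mid (by norm_num) (by norm_num)]
    norm_num


theorem stmt_17 :
    ∃ g : ℝ → ℝ, ContinuousOn g (Set.Icc (0 : ℝ) 1) ∧
      Set.MapsTo g (Set.Icc (0 : ℝ) 1) (Set.Icc (0 : ℝ) 1) ∧
      (∀ n : ℕ, ∃ y ∈ Set.Icc (0 : ℝ) 1, g^[2 ^ n] y = y ∧
        ∀ i, 0 < i → i < 2 ^ n → g^[i] y ≠ y) ∧
      ∀ m : ℕ, 0 < m → (¬∃ n : ℕ, m = 2 ^ n) →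
        ¬∃ y ∈ Set.Icc (0 : ℝ) 1, g^[m] y = y ∧
          ∀ i, 0 < i → i < m → g^[i] y ≠ y := by
  refine ⟨gg, gg_cont, fun x hx => gg_mem hx, ?_, ?_⟩
  · intro n
    refine ⟨yv n, ⟨(yv_pos n).le, le_trans (yv_le n) (by norm_num)⟩, (per n).1, (per n).2⟩
  · intro m hm hnot ⟨y, hy, hper, hmin⟩
    exact hnot (no_bad m hm y hy hper hmin)
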